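/- Let a₂ ∈ ℤ and Q₀(n) := a₂n². For every nonnegative integer l and every f ∈ ℤ[z^{±1},q^{±1}], the element Λ_{Q₀}((q^{-l}z;q)_{2l+1}·f) is divisible by (q^{l+1};q)_{l+1} in ℤ[q^{±1}]. -/

import Mathlib

open LaurentPolynomial

noncomputable section

/-- `ℤ[q^{±1}]`, the ring of Laurent polynomials in `q` over `ℤ`. -/
abbrev Rq := LaurentPolynomial ℤ

/-- `ℤ[z^{±1}, q^{±1}]`, with `z = T` (the outer variable) and `q = C (T 1)`. -/
abbrev Rzq := LaurentPolynomial Rq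

/-- `(q^a z; q)_k = ∏_{i=0}^{k-1} (1 - q^{a+i} z)` as an element of `ℤ[z^{±1}, q^{±1}]`. -/
def pochZ (a : ℤ) (k : ℕ) : Rzq :=
  ∏ i ∈ Finset.range k, (1 - C (T (a + (i : ℤ))) * T 1)

/-- `Λ_Q`, the `ℤ[q^{±1}]`-linear map `ℤ[z^{±1},q^{±1}] → ℤ[q^{±1}]` with `Λ_Q(z^j) = q^{Q(j)}`. -/
def Lam (Q : ℤ → ℤ) (f : Rzq) : Rq := Finsupp.sum f.coeff fun j c => c * T (Q j)

-- instance checks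
example : NoZeroDivisors Rq := inferInstance

lemma Lam_zero (Q : ℤ → ℤ) : Lam Q 0 = 0 := by
  unfold Lam; rw [AddMonoidAlgebra.coeff_zero]; exact Finsupp.sum_zero_index

lemma Lam_add (Q : ℤ → ℤ) (f g : Rzq) : Lam Q (f + g) = Lam Q f + Lam Q g := by
  unfold Lam; rw [AddMonoidAlgebra.coeff_add]; exact Finsupp.sum_add_index' (fun j => zero_mul _) (fun j b₁ b₂ => add_mul _ _ _)

lemma Lam_single (Q : ℤ → ℤ) (j : ℤ) (r : Rq) :
    Lam Q (AddMonoidAlgebra.single j r : Rzq) = r * T (Q j) := by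
  unfold Lam; rw [AddMonoidAlgebra.coeff_single]; exact Finsupp.sum_single_index (zero_mul _)

lemma Lam_C_mul_T (Q : ℤ → ℤ) (r : Rq) (j : ℤ) : Lam Q (C r * T j) = r * T (Q j) := by
  rw [← single_eq_C_mul_T]; exact Lam_single Q j r

lemma Lam_C_mul (Q : ℤ → ℤ) (r : Rq) (f : Rzq) : Lam Q (C r * f) = r * Lam Q f := by
  induction f using AddMonoidAlgebra.induction_linear with
  | zero => rw [mul_zero, Lam_zero, mul_zero]
  | add f g hf hg => rw [mul_add, Lam_add, Lam_add, hf, hg, mul_add]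
  | single j c =>
      rw [Lam_single, single_eq_C_mul_T, ← mul_assoc, ← map_mul, Lam_C_mul_T, mul_assoc]

lemma Lam_neg (Q : ℤ → ℤ) (f : Rzq) : Lam Q (-f) = - Lam Q f := by
  have : (-f : Rzq) = C (-1) * f := by rw [map_neg, map_one]; ring
  rw [this, Lam_C_mul]; ring

lemma Lam_sub (Q : ℤ → ℤ) (f g : Rzq) : Lam Q (f - g) = Lam Q f - Lam Q g := by
  rw [sub_eq_add_neg, Lam_add, Lam_neg, sub_eq_add_neg]

lemma poch_succ (c : ℤ) (k : ℕ) :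
    pochZ c (k+1) = pochZ c k * (1 - C (T (c + k)) * T 1) :=
  Finset.prod_range_succ _ _

lemma poch_succ' (c : ℤ) (k : ℕ) :
    pochZ c (k+1) = (1 - C (T c) * T 1) * pochZ (c+1) k := by
  rw [pochZ, Finset.prod_range_succ']
  rw [mul_comm]
  refine congrArg₂ (· * ·) ?_ ?_
  · push_cast; ring_nf
  · apply Finset.prod_congr rfl
    intro i _
    congr 2
    push_cast; ring

def Vv (a c : ℤ) (k : ℕ) (j : ℤ) : Rq := Lam (fun n => a * n ^ 2) (pochZ c k * T j)

lemma Vv_zero (a c j : ℤ) : Vv a c 0 j = T (a * j ^ 2) := by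
  rw [Vv, pochZ, Finset.prod_range_zero, one_mul, ← one_mul (T j : Rzq), ← map_one (C (R := Rq)),
    Lam_C_mul_T, one_mul]

lemma Vv_succ (a c : ℤ) (k : ℕ) (j : ℤ) :
    Vv a c (k+1) j = Vv a c k j - T (c + k) * Vv a c k (j+1) := by
  rw [Vv, Vv, Vv, poch_succ]
  have h1 : pochZ c k * (1 - C (T (c + k)) * T 1) * T j
      = pochZ c k * T j - C (T (c + k)) * (pochZ c k * T (j+1)) := by
    rw [show (T (j+1) : Rzq) = T j * T 1 from T_add j 1]; ring
  rw [h1, Lam_sub, Lam_C_mul]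

lemma Vv_succ' (a c : ℤ) (k : ℕ) (j : ℤ) :
    Vv a c (k+1) j = Vv a (c+1) k j - T c * Vv a (c+1) k (j+1) := by
  rw [Vv, Vv, Vv, poch_succ']
  have h1 : (1 - C (T c) * T 1) * pochZ (c+1) k * T j
      = pochZ (c+1) k * T j - C (T c) * (pochZ (c+1) k * T (j+1)) := by
    rw [show (T (j+1) : Rzq) = T j * T 1 from T_add j 1]; ring
  rw [h1, Lam_sub, Lam_C_mul]

lemma Vv_shift (a : ℤ) (k : ℕ) : ∀ (c j : ℤ), Vv a c k j = T (a * j ^ 2) * Vv a (c + 2*a*j) k 0 := by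
  induction k with
  | zero =>
      intro c j
      rw [Vv_zero, Vv_zero]
      rw [show a * (0:ℤ)^2 = 0 by ring, T_zero, mul_one]
  | succ k ih =>
      intro c j
      rw [Vv_succ, Vv_succ, ih c j, ih c (j+1), zero_add, ih (c + 2*a*j) 1]
      rw [mul_sub]
      congr 1
      rw [← mul_assoc, ← mul_assoc, ← mul_assoc, ← T_add, ← T_add, ← T_add,
        show c + 2*a*j + 2*a*1 = c + 2*a*(j+1) by ring]
      congr 2
      ring

lemma invert_single' (j : ℤ) (r : Rq) :
    invert (AddMonoidAlgebra.single j r : Rzq) = AddMonoidAlgebra.single (-j) r := by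
  rw [single_eq_C_mul_T, single_eq_C_mul_T, map_mul, invert_C, invert_T]

lemma invert_C' (r : Rq) : invert (C r : Rzq) = C r := by
  have h0 : (C r : Rzq) = AddMonoidAlgebra.single 0 r := by
    rw [single_eq_C_mul_T, T_zero, mul_one]
  rw [h0, invert_single', neg_zero]

lemma Lam_invert (Q : ℤ → ℤ) (hQ : ∀ j, Q (-j) = Q j) (f : Rzq) :
    Lam Q (invert f) = Lam Q f := by
  induction f using AddMonoidAlgebra.induction_linear with
  | zero => rw [map_zero]
  | add f g hf hg => rw [map_add, Lam_add, Lam_add, hf, hg]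
  | single j c => rw [invert_single', Lam_single, Lam_single, hQ]

def sExp (c : ℤ) (k : ℕ) : ℤ := ∑ i ∈ Finset.range k, (c + i)

lemma sExp_succ (c : ℤ) (k : ℕ) : sExp c (k+1) = sExp c k + (c + k) := by
  rw [sExp, Finset.sum_range_succ, sExp]

lemma sExp_eq (c : ℤ) (k : ℕ) : 2 * sExp c k = k * (2*c + k - 1) := by
  induction k with
  | zero => simp [sExp]
  | succ k ih => rw [sExp_succ, mul_add, ih]; push_cast; ring

lemma invert_poch (c : ℤ) : ∀ (k : ℕ),
    invert (pochZ c k) = (-1)^k * (C (T (sExp c k)) * (T (-(k:ℤ)) * pochZ (-c - k + 1) k)) := by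
  intro k
  induction k with
  | zero => simp [pochZ, sExp]
  | succ k ih =>
      have hcast : ((k+1 : ℕ) : ℤ) = (k:ℤ)+1 := by push_cast; ring
      rw [poch_succ, map_mul, ih, map_sub, map_one, map_mul, invert_C', invert_T]
      have hXY : (C (T (c + (k:ℤ))) * T (-1) : Rzq) * (C (T (-c - (k:ℤ))) * T 1) = 1 := by
        rw [mul_mul_mul_comm, ← map_mul, ← T_add,
          show (c + (k:ℤ)) + (-c - (k:ℤ)) = 0 from by ring, ← T_add, neg_add_cancel,
          T_zero, map_one, T_zero, one_mul]
      have key : (1 - C (T (c + (k:ℤ))) * T (-1) : Rzq)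
          = -((C (T (c + (k:ℤ))) : Rzq) * T (-1)) * (1 - C (T (-c - (k:ℤ))) * T 1) := by
        linear_combination -hXY
      have hP : pochZ (-c - ((k+1:ℕ):ℤ) + 1) (k+1)
          = (1 - C (T (-c - (k:ℤ))) * T 1) * pochZ (-c - (k:ℤ) + 1) k := by
        rw [hcast, show -c - ((k:ℤ)+1) + 1 = -c - (k:ℤ) from by ring, poch_succ']
      rw [key, sExp_succ, hP, hcast, T_add (sExp c k) (c + (k:ℤ)), map_mul,
        show -((k:ℤ)+1) = -(k:ℤ) + (-1) from by ring, T_add (-(k:ℤ)) (-1)]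
      ring

lemma Vv_sym (a c : ℤ) (k : ℕ) :
    Vv a c k 0 = (-1)^k * (T (sExp c k + a * (k:ℤ)^2) * Vv a (-c - k + 1 - 2*a*k) k 0) := by
  have hQ : ∀ j : ℤ, (fun n : ℤ => a * n ^ 2) (-j) = (fun n : ℤ => a * n ^ 2) j := by
    intro j; simp [neg_pow]
  have h0 : Vv a c k 0 = Lam (fun n => a * n ^ 2) (pochZ c k) := by
    rw [Vv, T_zero, mul_one]
  rw [h0, ← Lam_invert _ hQ (pochZ c k), invert_poch]
  have h1 : ((-1:Rzq))^k * (C (T (sExp c k)) * (T (-(k:ℤ)) * pochZ (-c - k + 1) k))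
      = C ((-1)^k * T (sExp c k)) * (pochZ (-c - (k:ℤ) + 1) k * T (-(k:ℤ))) := by
    rw [map_mul, map_pow, map_neg, map_one]; ring
  rw [h1, Lam_C_mul]
  have h2 : Lam (fun n => a * n ^ 2) (pochZ (-c - (k:ℤ) + 1) k * T (-(k:ℤ)))
      = Vv a (-c - (k:ℤ) + 1) k (-(k:ℤ)) := rfl
  rw [h2, Vv_shift a k (-c - (k:ℤ) + 1) (-(k:ℤ)),
    show -c - (k:ℤ) + 1 + 2*a*(-(k:ℤ)) = -c - (k:ℤ) + 1 - 2*a*(k:ℤ) from by ring,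
    show a * (-(k:ℤ))^2 = a * (k:ℤ)^2 from by ring, T_add (sExp c k) (a * (k:ℤ)^2)]
  ring

def Ee (k : ℕ) : Rq := ∏ i ∈ Finset.range (k - k/2), (1 - T ((k/2 + 1 + i : ℕ) : ℤ))

lemma Ee_odd (m : ℕ) : Ee (2*m+1) = (1 - T (((2*m+1:ℕ)):ℤ)) * Ee (2*m) := by
  have h1 : (2*m+1)/2 = m := by omega
  have h3 : (2*m)/2 = m := by omega
  have h2 : (2*m+1) - m = m+1 := by omega
  have h4 : 2*m - m = m := by omega
  rw [Ee, Ee, h1, h3, h2, h4, Finset.prod_range_succ,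
    show m+1+m = 2*m+1 from by omega, mul_comm]

lemma Ee_even (m : ℕ) : Ee (2*m+2) = (1 + T (((m+1:ℕ)):ℤ)) * Ee (2*m+1) := by
  have h1 : (2*m+2)/2 = m+1 := by omega
  have h3 : (2*m+1)/2 = m := by omega
  have h2 : (2*m+2) - (m+1) = m+1 := by omega
  have h4 : (2*m+1) - m = m+1 := by omega
  have key : ((1:Rq) + T ((m+1:ℕ):ℤ)) * (1 - T ((m+1:ℕ):ℤ)) = 1 - T ((2*m+2:ℕ):ℤ) := by
    have hc : ((2*m+2:ℕ):ℤ) = ((m+1:ℕ):ℤ) + ((m+1:ℕ):ℤ) := by push_cast; ring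
    rw [hc, T_add]; ring
  have hprod : ∏ i ∈ Finset.range m, ((1:Rq) - T ((m+1+(i+1):ℕ):ℤ))
      = ∏ i ∈ Finset.range m, ((1:Rq) - T ((m+1+1+i:ℕ):ℤ)) :=
    Finset.prod_congr rfl (fun i _ => by rw [show m+1+(i+1) = m+1+1+i from by omega])
  rw [Ee, Ee, h1, h3, h2, h4, Finset.prod_range_succ, Finset.prod_range_succ', hprod,
    show m+1+1+m = 2*m+2 from by omega, add_zero, ← key]
  ring

lemma Ee_step (k : ℕ) : Ee (k+1) ∣ (1 - T ((k+1 : ℕ) : ℤ)) * Ee k := by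
  rcases Nat.even_or_odd k with ⟨m, hm⟩ | ⟨m, hm⟩
  · have hk : k = 2*m := by omega
    rw [hk, ← Ee_odd]
  · have hk : k = 2*m+1 := by omega
    rw [hk]
    have key : ((1:Rq) - T ((2*m+1+1:ℕ):ℤ)) = (1 - T ((m+1:ℕ):ℤ)) * (1 + T ((m+1:ℕ):ℤ)) := by
      have hc : ((2*m+1+1:ℕ):ℤ) = ((m+1:ℕ):ℤ) + ((m+1:ℕ):ℤ) := by push_cast; ring
      rw [hc, T_add]; ring
    rw [key, mul_assoc, ← Ee_even]
    exact Dvd.intro_left _ rfl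

lemma one_sub_T_ne_zero (n : ℤ) (h : n ≠ 0) : (1 - T n : Rq) ≠ 0 := by
  intro heq
  have h1 : (T 0 : Rq) = T n := by rw [T_zero]; exact sub_eq_zero.mp heq
  have h2 : (T 0 : Rq).coeff 0 = (T n : Rq).coeff 0 := by rw [h1]
  simp only [T_apply] at h2
  simp [h] at h2

lemma Ee_ne_zero (k : ℕ) : Ee k ≠ 0 := by
  rw [Ee]
  rw [Finset.prod_ne_zero_iff]
  intro i _
  exact one_sub_T_ne_zero _ (by omega)

lemma monic_one_add_X_pow (R : Type*) [CommRing R] [Nontrivial R] (M : ℕ) (hM : 0 < M) :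
    ((1:Polynomial R) + Polynomial.X^M).Monic := by
  have h := Polynomial.monic_X_pow_add (p := (1:Polynomial R)) (n := M)
    (by rw [Polynomial.degree_one]; exact_mod_cast hM)
  rwa [add_comm] at h

lemma cop (M : ℕ) (hM : 0 < M) (t s : Rq)
    (h : (1 - T (M:ℤ)) * t = (1 + T (M:ℤ)) * s) : (1 + T (M:ℤ)) ∣ t := by
  obtain ⟨nt, tp, htp⟩ := t.exists_T_pow
  obtain ⟨ns, sp, hsp⟩ := s.exists_T_pow
  have key : ((1 - Polynomial.X^M) * tp * Polynomial.X^ns : Polynomial ℤ)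
      = (1 + Polynomial.X^M) * sp * Polynomial.X^nt := by
    apply Polynomial.toLaurent_injective
    rw [map_mul, map_mul, map_mul, map_mul, map_sub, map_add, map_one,
      Polynomial.toLaurent_X_pow, Polynomial.toLaurent_X_pow, Polynomial.toLaurent_X_pow,
      htp, hsp]
    linear_combination (T (nt:ℤ) * T (ns:ℤ)) * h
  have hmapkey := congrArg (Polynomial.map (Int.castRingHom ℚ)) key
  simp only [Polynomial.map_mul, Polynomial.map_sub, Polynomial.map_add, Polynomial.map_one,
    Polynomial.map_pow, Polynomial.map_X] at hmapkey
  have hco : IsCoprime ((1:Polynomial ℚ) + Polynomial.X^M) (1 - Polynomial.X^M) := by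
    refine ⟨Polynomial.C (1/2), Polynomial.C (1/2), ?_⟩
    have h2 : (Polynomial.C ((1:ℚ)/2)) + Polynomial.C ((1:ℚ)/2) = 1 := by
      rw [← Polynomial.C_add]; norm_num
    linear_combination h2
  have hdvd1 : ((1:Polynomial ℚ) + Polynomial.X^M) ∣
      (tp.map (Int.castRingHom ℚ)) * Polynomial.X^ns := by
    apply hco.dvd_of_dvd_mul_left
    rw [← mul_assoc, hmapkey, mul_assoc]
    exact Dvd.intro _ rfl
  have hcoX : IsCoprime ((1:Polynomial ℚ) + Polynomial.X^M) ((Polynomial.X:Polynomial ℚ)^ns) := by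
    apply IsCoprime.pow_right
    refine ⟨1, -Polynomial.X^(M-1), ?_⟩
    have hM1 : M - 1 + 1 = M := Nat.succ_pred_eq_of_pos hM
    rw [one_mul, neg_mul, ← pow_succ, hM1]; ring
  have hdvd2 : ((1:Polynomial ℚ) + Polynomial.X^M) ∣ tp.map (Int.castRingHom ℚ) :=
    hcoX.dvd_of_dvd_mul_right hdvd1
  have hmon := monic_one_add_X_pow ℤ M hM
  have hmonQ := monic_one_add_X_pow ℚ M hM
  have hmod0 : (tp %ₘ ((1:Polynomial ℤ) + Polynomial.X^M)).map (Int.castRingHom ℚ) = 0 := by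
    rw [Polynomial.map_modByMonic _ hmon, Polynomial.map_add, Polynomial.map_one,
      Polynomial.map_pow, Polynomial.map_X]
    exact (Polynomial.modByMonic_eq_zero_iff_dvd hmonQ).mpr hdvd2
  have htp0 : tp %ₘ ((1:Polynomial ℤ) + Polynomial.X^M) = 0 := by
    have hinj : Function.Injective (Polynomial.map (Int.castRingHom ℚ)) :=
      Polynomial.map_injective _ Int.cast_injective
    apply hinj; rw [hmod0, Polynomial.map_zero]
  obtain ⟨u, hu⟩ := (Polynomial.modByMonic_eq_zero_iff_dvd hmon).mp htp0
  have ht : t = Polynomial.toLaurent tp * T (-(nt:ℤ)) := by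
    rw [htp, mul_T_assoc, add_neg_cancel, T_zero, mul_one]
  rw [ht, hu, map_mul, map_add, map_one, Polynomial.toLaurent_X_pow]
  exact ⟨Polynomial.toLaurent u * T (-(nt:ℤ)), by ring⟩

lemma two_torsion_free (x : Rq) (h : x + x = 0) : x = 0 := by
  have hn : ∀ n : ℤ, x.coeff n = (0 : Rq).coeff n := by
    intro n
    have h1 : (x + x).coeff n = (0 : Rq).coeff n := by rw [h]
    rw [AddMonoidAlgebra.coeff_add, Finsupp.add_apply, AddMonoidAlgebra.coeff_zero,
      Finsupp.zero_apply] at h1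
    rw [AddMonoidAlgebra.coeff_zero, Finsupp.zero_apply]
    omega
  exact LaurentPolynomial.ext hn

lemma main (k : ℕ) : ∀ (a c j : ℤ), Ee k ∣ Vv a c k j := by
  induction k with
  | zero => intro a c j; simp [Ee]
  | succ k ih =>
      intro a c j
      suffices h0 : ∀ c : ℤ, Ee (k+1) ∣ Vv a c (k+1) 0 by
        rw [Vv_shift a (k+1) c j]
        exact (h0 _).mul_left _
      have hstep : ∀ c : ℤ, Ee (k+1) ∣ Vv a (c+1) (k+1) 0 - Vv a c (k+1) 0 := by
        intro c
        have e1 := Vv_succ a (c+1) k 0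
        have e2 := Vv_succ' a c k 0
        have heq : Vv a (c+1) (k+1) 0 - Vv a c (k+1) 0
            = (T c - T (c+1+(k:ℤ))) * Vv a (c+1) k (0+1) := by
          rw [e1, e2]; ring
        rw [heq]
        obtain ⟨w, hw⟩ := ih a (c+1) (0+1)
        rw [hw]
        have hcst : c + 1 + (k:ℤ) = c + ((k+1:ℕ):ℤ) := by push_cast; ring
        have hT : (T c - T (c+1+(k:ℤ)) : Rq) = T c * (1 - T ((k+1:ℕ):ℤ)) := by
          rw [hcst, mul_sub, mul_one, ← T_add]
        rw [hT]
        obtain ⟨v, hv⟩ := Ee_step k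
        exact ⟨T c * v * w, by linear_combination (T c * w : Rq) * hv⟩
      have hchain : ∀ c d : ℤ, Ee (k+1) ∣ Vv a c (k+1) 0 - Vv a d (k+1) 0 := by
        have key : ∀ (d n : ℤ), Ee (k+1) ∣ Vv a (d + n) (k+1) 0 - Vv a d (k+1) 0 := by
          intro d n
          induction n using Int.induction_on with
          | zero => simp
          | succ i ihn =>
              have h1 := hstep (d + i)
              rw [show d + ((i:ℤ)+1) = (d + i) + 1 from by ring]
              rw [← sub_add_sub_cancel (Vv a ((d+(i:ℤ))+1) (k+1) 0) (Vv a (d+(i:ℤ)) (k+1) 0)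
                (Vv a d (k+1) 0)]
              exact dvd_add h1 ihn
          | pred i ihn =>
              have h1 := hstep (d + (-(i:ℤ)-1))
              rw [show d + (-(i:ℤ)-1) + 1 = d + (-(i:ℤ)) from by ring] at h1
              rw [show Vv a (d + (-(i:ℤ)-1)) (k+1) 0 - Vv a d (k+1) 0
                  = (Vv a (d + (-(i:ℤ))) (k+1) 0 - Vv a d (k+1) 0)
                    - (Vv a (d + (-(i:ℤ))) (k+1) 0 - Vv a (d + (-(i:ℤ)-1)) (k+1) 0) from by ring]
              exact dvd_sub ihn h1
        intro c d
        have h2 := key d (c - d)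
        rwa [show d + (c - d) = c from by ring] at h2
      have hsub : ∀ c : ℤ, Ee k ∣ Vv a c (k+1) 0 := by
        intro c
        rw [Vv_succ a c k 0]
        exact dvd_sub (ih a c 0) ((ih a c (0+1)).mul_left _)
      rcases Nat.even_or_odd k with ⟨m, hm⟩ | ⟨m, hm⟩
      · -- k = 2m, k+1 odd
        have hk : k = 2*m := by omega
        subst hk
        have hE : sExp (-(m:ℤ) - a*(2*(m:ℤ)+1)) (2*m+1) + a * ((2*m+1:ℕ):ℤ)^2 = 0 := by
          have h2 := sExp_eq (-(m:ℤ) - a*(2*(m:ℤ)+1)) (2*m+1)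
          have h3 : 2*(sExp (-(m:ℤ) - a*(2*(m:ℤ)+1)) (2*m+1) + a * ((2*m+1:ℕ):ℤ)^2) = 0 := by
            push_cast at h2 ⊢
            linear_combination h2
          linarith
        have hzero : Vv a (-(m:ℤ) - a*(2*(m:ℤ)+1)) (2*m+1) 0 = 0 := by
          have hs := Vv_sym a (-(m:ℤ) - a*(2*(m:ℤ)+1)) (2*m+1)
          have harg : -(-(m:ℤ) - a*(2*(m:ℤ)+1)) - ((2*m+1:ℕ):ℤ) + 1 - 2*a*((2*m+1:ℕ):ℤ)
              = -(m:ℤ) - a*(2*(m:ℤ)+1) := by push_cast; ring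
          rw [hE, harg, T_zero, one_mul, Odd.neg_one_pow ⟨m, by ring⟩] at hs
          exact two_torsion_free _ (by linear_combination hs)
        intro c
        have hc2 := hchain c (-(m:ℤ) - a*(2*(m:ℤ)+1))
        rwa [hzero, sub_zero] at hc2
      · -- k = 2m+1, k+1 even
        have hk : k = 2*m+1 := hm
        subst hk
        have hE : sExp (1 - ((m:ℤ)+1) - 2*a*((m:ℤ)+1)) (2*m+2) + a * ((2*m+2:ℕ):ℤ)^2
            = ((m+1:ℕ):ℤ) := by
          have h2 := sExp_eq (1 - ((m:ℤ)+1) - 2*a*((m:ℤ)+1)) (2*m+2)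
          have h3 : 2*(sExp (1 - ((m:ℤ)+1) - 2*a*((m:ℤ)+1)) (2*m+2) + a * ((2*m+2:ℕ):ℤ)^2
              - ((m+1:ℕ):ℤ)) = 0 := by
            push_cast at h2 ⊢
            linear_combination h2
          linarith
        have hs := Vv_sym a (1 - ((m:ℤ)+1) - 2*a*((m:ℤ)+1)) (2*m+2)
        have harg : -(1 - ((m:ℤ)+1) - 2*a*((m:ℤ)+1)) - ((2*m+2:ℕ):ℤ) + 1 - 2*a*((2*m+2:ℕ):ℤ)
            = (1 - ((m:ℤ)+1) - 2*a*((m:ℤ)+1)) - 1 := by push_cast; ring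
        rw [hE, harg, Even.neg_one_pow ⟨m+1, by ring⟩, one_mul] at hs
        have h1 : Ee (2*m+2) ∣ (1 - T ((m+1:ℕ):ℤ)) * Vv a ((1 - ((m:ℤ)+1) - 2*a*((m:ℤ)+1)) - 1) (2*m+2) 0 := by
          have hc := hchain ((1 - ((m:ℤ)+1) - 2*a*((m:ℤ)+1)) - 1) (1 - ((m:ℤ)+1) - 2*a*((m:ℤ)+1))
          rw [hs] at hc
          have hrw : Vv a ((1 - ((m:ℤ)+1) - 2*a*((m:ℤ)+1)) - 1) (2*m+2) 0
              - T ((m+1:ℕ):ℤ) * Vv a ((1 - ((m:ℤ)+1) - 2*a*((m:ℤ)+1)) - 1) (2*m+2) 0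
              = (1 - T ((m+1:ℕ):ℤ)) * Vv a ((1 - ((m:ℤ)+1) - 2*a*((m:ℤ)+1)) - 1) (2*m+2) 0 := by
            ring
          rwa [hrw] at hc
        have h2 : Ee (2*m+1) ∣ Vv a ((1 - ((m:ℤ)+1) - 2*a*((m:ℤ)+1)) - 1) (2*m+2) 0 := hsub ((1 - ((m:ℤ)+1) - 2*a*((m:ℤ)+1)) - 1)
        obtain ⟨t, ht⟩ := h2
        obtain ⟨s2, hs2⟩ := h1
        have hcancel : (1 - T ((m+1:ℕ):ℤ)) * t = (1 + T ((m+1:ℕ):ℤ)) * s2 := by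
          apply mul_left_cancel₀ (Ee_ne_zero (2*m+1))
          rw [ht, Ee_even m] at hs2
          linear_combination hs2
        obtain ⟨u, hu⟩ := cop (m+1) (by omega) t s2 hcancel
        have hX : Ee (2*m+2) ∣ Vv a ((1 - ((m:ℤ)+1) - 2*a*((m:ℤ)+1)) - 1) (2*m+2) 0 := ⟨u, by rw [ht, hu, Ee_even m]; ring⟩
        have hc₀ : Ee (2*m+2) ∣ Vv a (1 - ((m:ℤ)+1) - 2*a*((m:ℤ)+1)) (2*m+2) 0 := by
          rw [hs]; exact hX.mul_left _
        intro c
        have hc2 := hchain c (1 - ((m:ℤ)+1) - 2*a*((m:ℤ)+1))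
        have hfin := dvd_add hc2 hc₀
        rwa [sub_add_cancel] at hfin



/-- For `Q₀(n) = a₂ n²` and any `f`, `Λ_{Q₀}((q^{-l}z;q)_{2l+1}·f)` is divisible by
`(q^{l+1};q)_{l+1}` in `ℤ[q^{±1}]`. -/
theorem stmt_2 (a₂ : ℤ) (l : ℕ) (f : Rzq) :
    (∏ i ∈ Finset.range (l + 1), (1 - T ((l : ℤ) + 1 + (i : ℤ)) : Rq)) ∣
      Lam (fun n => a₂ * n ^ 2) (pochZ (-(l : ℤ)) (2 * l + 1) * f) := by
  have hE : (∏ i ∈ Finset.range (l + 1), (1 - T ((l : ℤ) + 1 + (i : ℤ)) : Rq)) = Ee (2*l+1) := by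
    rw [Ee, show (2*l+1)/2 = l from by omega, show 2*l+1 - l = l+1 from by omega]
    apply Finset.prod_congr rfl
    intro i _
    congr 1
  rw [hE]
  induction f using AddMonoidAlgebra.induction_linear with
  | zero => rw [mul_zero, Lam_zero]; exact dvd_zero _
  | add f g hf hg => rw [mul_add, Lam_add]; exact dvd_add hf hg
  | single j r =>
      rw [single_eq_C_mul_T,
        show pochZ (-(l:ℤ)) (2*l+1) * (C r * T j) = C r * (pochZ (-(l:ℤ)) (2*l+1) * T j) from by
          ring, Lam_C_mul]
      exact (main (2*l+1) a₂ (-(l:ℤ)) j).mul_left r
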